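/- For each t ≥ 0, the minimizer of V(q) = αᵀ(Σ⁻¹ + diag(q))⁻¹α over the simplex {q ∈ ℝ_{≥0}^K : Σ_i q_i = t} is unique, where Σ is a K×K symmetric positive-definite matrix and α ∈ ℝ^K with all α_i > 0. -/

import Mathlib

open Matrix

namespace Stmt11Aux

variable {K : ℕ}

lemma dot_symm {B : Matrix (Fin K) (Fin K) ℝ} (hB : Bᵀ = B) (x y : Fin K → ℝ) :
    x ⬝ᵥ (B *ᵥ y) = y ⬝ᵥ (B *ᵥ x) := by
  rw [dotProduct_mulVec, ← mulVec_transpose, hB, dotProduct_comm]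

lemma transpose_eq {B : Matrix (Fin K) (Fin K) ℝ} (hB : B.IsHermitian) : Bᵀ = B := by
  have := hB.eq
  rwa [conjTranspose_eq_transpose_of_trivial] at this

lemma pd_quad_pos {B : Matrix (Fin K) (Fin K) ℝ} (hB : B.PosDef) {v : Fin K → ℝ}
    (hv : v ≠ 0) : 0 < v ⬝ᵥ (B *ᵥ v) := by
  simpa using hB.dotProduct_mulVec_pos hv

lemma psd_quad_nonneg {B : Matrix (Fin K) (Fin K) ℝ} (hB : B.PosSemidef) (v : Fin K → ℝ) :
    0 ≤ v ⬝ᵥ (B *ᵥ v) := by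
  simpa using hB.dotProduct_mulVec_nonneg v

lemma mulVec_inv_mulVec {B : Matrix (Fin K) (Fin K) ℝ} (hB : IsUnit B.det)
    (α : Fin K → ℝ) : B *ᵥ (B⁻¹ *ᵥ α) = α := by
  rw [mulVec_mulVec, mul_nonsing_inv _ hB, one_mulVec]

lemma quad_identity {B : Matrix (Fin K) (Fin K) ℝ} (hB : B.PosDef) (α z : Fin K → ℝ) :
    α ⬝ᵥ (B⁻¹ *ᵥ α) =
      (2 * (z ⬝ᵥ α) - z ⬝ᵥ (B *ᵥ z)) +
        ((z - B⁻¹ *ᵥ α) ⬝ᵥ (B *ᵥ (z - B⁻¹ *ᵥ α))) := by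
  set w := B⁻¹ *ᵥ α with hw
  have hdet : IsUnit B.det := hB.det_pos.ne'.isUnit
  have hBsymm : Bᵀ = B := transpose_eq hB.1
  have hBw : B *ᵥ w = α := mulVec_inv_mulVec hdet α
  have h2 : w ⬝ᵥ (B *ᵥ z) = z ⬝ᵥ α := by rw [dot_symm hBsymm, hBw]
  have h1 : (z - w) ⬝ᵥ (B *ᵥ (z - w)) =
      z ⬝ᵥ (B *ᵥ z) - z ⬝ᵥ α - z ⬝ᵥ α + w ⬝ᵥ α := by
    rw [mulVec_sub, hBw, sub_dotProduct, dotProduct_sub, dotProduct_sub, h2]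
    ring
  have hαw : α ⬝ᵥ w = w ⬝ᵥ α := dotProduct_comm _ _
  rw [h1, hαw]; ring

lemma inv_diff {B C : Matrix (Fin K) (Fin K) ℝ} (hB : IsUnit B.det) (hC : IsUnit C.det)
    (hBsymm : Bᵀ = B) (α : Fin K → ℝ) :
    α ⬝ᵥ (B⁻¹ *ᵥ α) - α ⬝ᵥ (C⁻¹ *ᵥ α) =
      (B⁻¹ *ᵥ α) ⬝ᵥ ((C - B) *ᵥ (C⁻¹ *ᵥ α)) := by
  have hmat : B⁻¹ - C⁻¹ = B⁻¹ * ((C - B) * C⁻¹) := by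
    rw [Matrix.sub_mul, mul_nonsing_inv _ hC, Matrix.mul_sub, Matrix.mul_one,
      ← Matrix.mul_assoc, nonsing_inv_mul _ hB, Matrix.one_mul]
  have hsymm' : B⁻¹ᵀ = B⁻¹ := by rw [transpose_nonsing_inv, hBsymm]
  calc α ⬝ᵥ (B⁻¹ *ᵥ α) - α ⬝ᵥ (C⁻¹ *ᵥ α)
      = α ⬝ᵥ ((B⁻¹ - C⁻¹) *ᵥ α) := by rw [sub_mulVec, dotProduct_sub]
    _ = α ⬝ᵥ (B⁻¹ *ᵥ ((C - B) *ᵥ (C⁻¹ *ᵥ α))) := by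
          rw [hmat, ← mulVec_mulVec, ← mulVec_mulVec]
    _ = ((C - B) *ᵥ (C⁻¹ *ᵥ α)) ⬝ᵥ (B⁻¹ *ᵥ α) := dot_symm hsymm' _ _
    _ = (B⁻¹ *ᵥ α) ⬝ᵥ ((C - B) *ᵥ (C⁻¹ *ᵥ α)) := dotProduct_comm _ _

lemma contAt_inv_entry {X : Type*} [TopologicalSpace X] (α : Fin K → ℝ)
    {f : X → Matrix (Fin K) (Fin K) ℝ} (hf : Continuous f) (k : Fin K) {x₀ : X}
    (h : (f x₀).det ≠ 0) :
    ContinuousAt (fun x => ((f x)⁻¹ *ᵥ α) k) x₀ := by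
  have heq : ∀ x, ((f x)⁻¹ *ᵥ α) k = ((f x).det)⁻¹ * (((f x).adjugate *ᵥ α) k) := by
    intro x
    rw [inv_def, Ring.inverse_eq_inv, smul_mulVec]
    simp [smul_eq_mul]
  simp only [heq]
  exact ((hf.matrix_det.continuousAt).inv₀ h).mul
    (((continuous_apply k).comp ((hf.matrix_adjugate).matrix_mulVec continuous_const)).continuousAt)

lemma contAt_inv_quad {X : Type*} [TopologicalSpace X] (α : Fin K → ℝ)
    {f : X → Matrix (Fin K) (Fin K) ℝ} (hf : Continuous f) {x₀ : X}
    (h : (f x₀).det ≠ 0) :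
    ContinuousAt (fun x => α ⬝ᵥ ((f x)⁻¹ *ᵥ α)) x₀ := by
  have heq : ∀ x, α ⬝ᵥ ((f x)⁻¹ *ᵥ α)
      = ((f x).det)⁻¹ * (α ⬝ᵥ ((f x).adjugate *ᵥ α)) := by
    intro x
    rw [inv_def, Ring.inverse_eq_inv, smul_mulVec, dotProduct_smul]
    simp [smul_eq_mul]
  simp only [heq]
  exact ((hf.matrix_det.continuousAt).inv₀ h).mul
    ((continuous_const.dotProduct ((hf.matrix_adjugate).matrix_mulVec continuous_const)).continuousAt)


lemma posdef_add_diag {A : Matrix (Fin K) (Fin K) ℝ} (hA : A.PosDef)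
    {q : Fin K → ℝ} (hq : ∀ i, 0 ≤ q i) : (A + diagonal q).PosDef :=
  hA.add_posSemidef (posSemidef_diagonal_iff.mpr fun i => hq i)

lemma perturb {S : Matrix (Fin K) (Fin K) ℝ} (hS : S.PosDef) {α : Fin K → ℝ} {t : ℝ}
    {q : Fin K → ℝ} (hq0 : ∀ i, 0 ≤ q i) (hq1 : ∑ i, q i = t)
    (hqmin : ∀ r, (∀ i, 0 ≤ r i) → (∑ i, r i = t) →
      α ⬝ᵥ ((S⁻¹ + diagonal q)⁻¹ *ᵥ α) ≤ α ⬝ᵥ ((S⁻¹ + diagonal r)⁻¹ *ᵥ α))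
    {j : Fin K} (hqj : 0 < q j) (hxj : ((S⁻¹ + diagonal q)⁻¹ *ᵥ α) j = 0) (k : Fin K) :
    ((S⁻¹ + diagonal q)⁻¹ *ᵥ α) k = 0 := by
  have hA : (S⁻¹).PosDef := hS.inv
  by_cases hk : k = j
  · rw [hk]; exact hxj
  set B := S⁻¹ + diagonal q with hBdef
  have hB : B.PosDef := posdef_add_diag hA hq0
  set x : Fin K → ℝ := B⁻¹ *ᵥ α with hxdef
  set e : Fin K → ℝ := fun i => (if i = k then 1 else 0) - (if i = j then 1 else 0) with hedef
  -- key inequality for each small ε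
  have key : ∀ ε ∈ Set.Ioc (0:ℝ) (q j), x k * (((S⁻¹ + diagonal (q + ε • e))⁻¹ *ᵥ α) k) ≤ 0 := by
    intro ε hε
    set qε : Fin K → ℝ := q + ε • e with hqεdef
    have hqε0 : ∀ i, 0 ≤ qε i := by
      intro i
      by_cases h1 : i = k
      · subst h1; simp [hqεdef, hedef, hk]
        have := hq0 i
        nlinarith [hε.1]
      by_cases h2 : i = j
      · subst h2; simp [hqεdef, hedef, h1]
        linarith [hε.2]
      · simp [hqεdef, hedef, h1, h2, hq0 i]
    have hqε1 : ∑ i, qε i = t := by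
      have hsume : ∑ i, e i = 0 := by
        simp [hedef, Finset.sum_sub_distrib, Finset.sum_ite_eq']
      simp only [hqεdef, Pi.add_apply, Pi.smul_apply, smul_eq_mul]
      rw [Finset.sum_add_distrib, hq1, ← Finset.mul_sum, hsume, mul_zero, add_zero]
    set C := S⁻¹ + diagonal qε with hCdef
    have hC : C.PosDef := posdef_add_diag hA hqε0
    set xε : Fin K → ℝ := C⁻¹ *ᵥ α with hxεdef
    have hmin : α ⬝ᵥ (B⁻¹ *ᵥ α) ≤ α ⬝ᵥ (C⁻¹ *ᵥ α) := hqmin qε hqε0 hqε1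
    have hdiff : α ⬝ᵥ (B⁻¹ *ᵥ α) - α ⬝ᵥ (C⁻¹ *ᵥ α) = x ⬝ᵥ ((C - B) *ᵥ xε) :=
      inv_diff hB.det_pos.ne'.isUnit hC.det_pos.ne'.isUnit (transpose_eq hB.1) α
    have hCB : C - B = diagonal (ε • e) := by
      ext i i'
      simp only [hCdef, hBdef, Matrix.sub_apply, Matrix.add_apply, diagonal_apply, hqεdef,
        Pi.add_apply, Pi.smul_apply, smul_eq_mul]
      split_ifs <;> ring
    have hsum : x ⬝ᵥ ((C - B) *ᵥ xε) = ε * (x k * xε k) := by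
      rw [hCB]
      have hterm : ∀ i, x i * ((diagonal (ε • e)) *ᵥ xε) i =
          (if i = k then ε * (x k * xε k) else 0) - (if i = j then ε * (x j * xε j) else 0) := by
        intro i
        rw [mulVec_diagonal]
        by_cases h1 : i = k
        · subst h1
          simp [hedef, hk]
          ring
        by_cases h2 : i = j
        · subst h2
          simp [hedef, h1]
          ring
        · simp [hedef, h1, h2]
      rw [dotProduct]
      rw [Finset.sum_congr rfl fun i _ => hterm i, Finset.sum_sub_distrib]
      simp [Finset.sum_ite_eq', hxj]
    have : ε * (x k * xε k) ≤ 0 := by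
      rw [← hsum, ← hdiff]; linarith
    nlinarith [hε.1]
  -- pass to the limit ε → 0⁺
  set F : ℝ → ℝ := fun ε => x k * (((S⁻¹ + diagonal (q + ε • e))⁻¹ *ᵥ α) k) with hFdef
  have hF0 : F 0 = x k * x k := by simp [hFdef, hxdef, hBdef]
  have hcontF : ContinuousAt F 0 := by
    apply ContinuousAt.mul continuousAt_const
    apply contAt_inv_entry α
    · exact continuous_const.add
        ((continuous_const.add (continuous_id.smul continuous_const)).matrix_diagonal)
    · show ((fun ε : ℝ => S⁻¹ + diagonal (q + ε • e)) 0).det ≠ 0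
      simpa using (posdef_add_diag hA hq0).det_pos.ne'
  have hFle : F 0 ≤ 0 := by
    refine le_of_tendsto (hcontF.continuousWithinAt.tendsto (s := Set.Ioi (0:ℝ))) ?_
    filter_upwards [Ioc_mem_nhdsGT_of_mem ⟨le_refl (0:ℝ), hqj⟩] with ε hε
    exact key ε hε
  rw [hF0] at hFle
  exact mul_self_eq_zero.mp (le_antisymm hFle (mul_self_nonneg _))

lemma min_unique {S : Matrix (Fin K) (Fin K) ℝ} (hS : S.PosDef) {α : Fin K → ℝ}
    (hα : ∀ i, 0 < α i) {t : ℝ} {q r : Fin K → ℝ}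
    (hq0 : ∀ i, 0 ≤ q i) (hq1 : ∑ i, q i = t)
    (hqmin : ∀ p, (∀ i, 0 ≤ p i) → (∑ i, p i = t) →
      α ⬝ᵥ ((S⁻¹ + diagonal q)⁻¹ *ᵥ α) ≤ α ⬝ᵥ ((S⁻¹ + diagonal p)⁻¹ *ᵥ α))
    (hr0 : ∀ i, 0 ≤ r i) (hr1 : ∑ i, r i = t)
    (hrmin : ∀ p, (∀ i, 0 ≤ p i) → (∑ i, p i = t) →
      α ⬝ᵥ ((S⁻¹ + diagonal r)⁻¹ *ᵥ α) ≤ α ⬝ᵥ ((S⁻¹ + diagonal p)⁻¹ *ᵥ α)) :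
    r = q := by
  have hA : (S⁻¹).PosDef := hS.inv
  set B := S⁻¹ + diagonal q with hBdef
  set C := S⁻¹ + diagonal r with hCdef
  have hB : B.PosDef := posdef_add_diag hA hq0
  have hC : C.PosDef := posdef_add_diag hA hr0
  set m : Fin K → ℝ := (2⁻¹ : ℝ) • (q + r) with hmdef
  have hm0 : ∀ i, 0 ≤ m i := by
    intro i
    have := hq0 i; have := hr0 i
    simp only [hmdef, Pi.smul_apply, Pi.add_apply, smul_eq_mul]
    linarith
  have hm1 : ∑ i, m i = t := by
    simp only [hmdef, Pi.smul_apply, Pi.add_apply, smul_eq_mul]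
    rw [← Finset.mul_sum, Finset.sum_add_distrib, hq1, hr1]
    ring
  set M := S⁻¹ + diagonal m with hMdef
  have hM : M.PosDef := posdef_add_diag hA hm0
  set z : Fin K → ℝ := M⁻¹ *ᵥ α with hzdef
  set x : Fin K → ℝ := B⁻¹ *ᵥ α with hxdef
  set y : Fin K → ℝ := C⁻¹ *ᵥ α with hydef
  have hBC2M : B + C = (2 : ℝ) • M := by
    ext i i'
    simp only [hBdef, hCdef, hMdef, hmdef, Matrix.add_apply, Matrix.smul_apply,
      diagonal_apply, Pi.smul_apply, Pi.add_apply, smul_eq_mul]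
    split_ifs <;> ring
  have hMz : z ⬝ᵥ (B *ᵥ z) + z ⬝ᵥ (C *ᵥ z) = 2 * (z ⬝ᵥ (M *ᵥ z)) := by
    have h1 : (B + C) *ᵥ z = ((2 : ℝ) • M) *ᵥ z := by rw [hBC2M]
    rw [add_mulVec, smul_mulVec] at h1
    calc z ⬝ᵥ (B *ᵥ z) + z ⬝ᵥ (C *ᵥ z) = z ⬝ᵥ (B *ᵥ z + C *ᵥ z) := (dotProduct_add _ _ _).symm
      _ = z ⬝ᵥ ((2:ℝ) • (M *ᵥ z)) := by rw [h1]
      _ = 2 * (z ⬝ᵥ (M *ᵥ z)) := by rw [dotProduct_smul, smul_eq_mul]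
  have Iq := quad_identity hB α z
  have Ir := quad_identity hC α z
  have Im := quad_identity hM α z
  rw [← hzdef, sub_self, mulVec_zero, dotProduct_zero, add_zero] at Im
  have hRB : 0 ≤ (z - x) ⬝ᵥ (B *ᵥ (z - x)) := psd_quad_nonneg hB.posSemidef _
  have hRC : 0 ≤ (z - y) ⬝ᵥ (C *ᵥ (z - y)) := psd_quad_nonneg hC.posSemidef _
  have hqr : α ⬝ᵥ (B⁻¹ *ᵥ α) = α ⬝ᵥ (C⁻¹ *ᵥ α) :=
    le_antisymm (hqmin r hr0 hr1) (hrmin q hq0 hq1)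
  have hqm : α ⬝ᵥ (B⁻¹ *ᵥ α) ≤ α ⬝ᵥ (M⁻¹ *ᵥ α) := hqmin m hm0 hm1
  rw [← hydef] at hqr Ir
  rw [← hzdef] at hqm
  have hRB0 : (z - x) ⬝ᵥ (B *ᵥ (z - x)) = 0 := by linarith
  have hRC0 : (z - y) ⬝ᵥ (C *ᵥ (z - y)) = 0 := by linarith
  have hzx : z = x := by
    by_contra h
    exact absurd hRB0 (pd_quad_pos hB (sub_ne_zero.mpr fun hh => h hh)).ne'
  have hzy : z = y := by
    by_contra h
    exact absurd hRC0 (pd_quad_pos hC (sub_ne_zero.mpr fun hh => h hh)).ne'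
  have hxy : x = y := hzx ▸ hzy
  have hBx : B *ᵥ x = α := mulVec_inv_mulVec hB.det_pos.ne'.isUnit α
  have hCy : C *ᵥ y = α := mulVec_inv_mulVec hC.det_pos.ne'.isUnit α
  have hkill : ∀ i, (q i - r i) * x i = 0 := by
    intro i
    have h1 : (B - C) *ᵥ x = 0 := by
      rw [sub_mulVec, hBx, hxy, hCy, sub_self]
    have h2 : B - C = diagonal (q - r) := by
      ext i i'
      simp only [hBdef, hCdef, Matrix.sub_apply, Matrix.add_apply, diagonal_apply,
        Pi.sub_apply]
      split_ifs <;> ring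
    have h3 := congrFun h1 i
    rw [h2, mulVec_diagonal] at h3
    simpa using h3
  by_contra hne
  obtain ⟨i0, hi0⟩ := Function.ne_iff.mp hne
  have hj : ∃ j, r j < q j := by
    by_contra h
    push_neg at h
    have : ∑ i, q i < ∑ i, r i :=
      Finset.sum_lt_sum (fun i _ => h i) ⟨i0, Finset.mem_univ i0, lt_of_le_of_ne (h i0) (Ne.symm hi0)⟩
    rw [hq1, hr1] at this
    exact lt_irrefl t this
  obtain ⟨j, hjlt⟩ := hj
  have hqj : 0 < q j := lt_of_le_of_lt (hr0 j) hjlt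
  have hxj : x j = 0 := by
    have := hkill j
    rcases mul_eq_zero.mp this with h | h
    · exact absurd h (sub_ne_zero.mpr (ne_of_gt hjlt))
    · exact h
  have hx0 : ∀ k, x k = 0 := perturb hS hq0 hq1 hqmin hqj hxj
  have hα0 : α = 0 := by
    have hx : x = 0 := by ext k; exact hx0 k
    rw [← hBx, hx, mulVec_zero]
  exact absurd (hα j) (by rw [hα0]; simp)

end Stmt11Aux


theorem stmt_11 {K : ℕ} (hK : 1 ≤ K) (S : Matrix (Fin K) (Fin K) ℝ) (hS : S.PosDef)
    (α : Fin K → ℝ) (hα : ∀ i, 0 < α i) (t : ℝ) (ht : 0 ≤ t) :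
    ∃! q : Fin K → ℝ, (∀ i, 0 ≤ q i) ∧ (∑ i, q i = t) ∧
      ∀ r : Fin K → ℝ, (∀ i, 0 ≤ r i) → (∑ i, r i = t) →
        α ⬝ᵥ ((S⁻¹ + diagonal q)⁻¹ *ᵥ α) ≤ α ⬝ᵥ ((S⁻¹ + diagonal r)⁻¹ *ᵥ α) := by
  classical
  set Dset : Set (Fin K → ℝ) := {p | (∀ i, 0 ≤ p i) ∧ ∑ i, p i = t} with hDdef
  have hclosed : IsClosed Dset := by
    have : Dset = (⋂ i, {p : Fin K → ℝ | 0 ≤ p i}) ∩ {p : Fin K → ℝ | ∑ i, p i = t} := by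
      ext p; simp [hDdef, Set.mem_iInter]
    rw [this]
    exact (isClosed_iInter fun i => isClosed_le continuous_const (continuous_apply i)).inter
      (isClosed_eq (continuous_finset_sum _ fun i _ => continuous_apply i) continuous_const)
  have hsub : Dset ⊆ Set.Icc (0 : Fin K → ℝ) (fun _ => t) := by
    intro p hp
    refine ⟨fun i => hp.1 i, fun i => ?_⟩
    calc p i ≤ ∑ i', p i' := Finset.single_le_sum (fun i' _ => hp.1 i') (Finset.mem_univ i)
      _ = t := hp.2
  have hcompact : IsCompact Dset := (isCompact_Icc).of_isClosed_subset hclosed hsub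
  have hne : Dset.Nonempty := by
    refine ⟨fun i => if i = ⟨0, hK⟩ then t else 0, fun i => ?_, ?_⟩
    · dsimp only; split_ifs <;> simp [ht]
    · simp [Finset.sum_ite_eq']
  have hcont : ContinuousOn (fun p => α ⬝ᵥ ((S⁻¹ + diagonal p)⁻¹ *ᵥ α)) Dset := by
    intro p hp
    exact (Stmt11Aux.contAt_inv_quad α
      (continuous_const.add (continuous_id.matrix_diagonal))
      ((Stmt11Aux.posdef_add_diag hS.inv hp.1).det_pos.ne')).continuousWithinAt
  obtain ⟨q, hqD, hqmin⟩ := hcompact.exists_isMinOn hne hcont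
  have hqmin' : ∀ r, (∀ i, 0 ≤ r i) → (∑ i, r i = t) →
      α ⬝ᵥ ((S⁻¹ + diagonal q)⁻¹ *ᵥ α) ≤ α ⬝ᵥ ((S⁻¹ + diagonal r)⁻¹ *ᵥ α) :=
    fun r h1 h2 => hqmin ⟨h1, h2⟩
  exact ⟨q, ⟨hqD.1, hqD.2, hqmin'⟩, fun r hr =>
    Stmt11Aux.min_unique hS hα hqD.1 hqD.2 hqmin' hr.1 hr.2.1 hr.2.2⟩
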